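/- Let Ω be a finite set with |Ω| = n, let G be a permutation group on Ω, let R be an unordered relation on Ω with G ≤ G(R), and let k be an integer with 1 ≤ k and 2k ≤ n + 1 such that no set x ∈ R satisfies k < |x| < n − k. Then every permutation g of Ω with the property that for every k-element subset x of Ω the image g·x lies in the G-orbit of x belongs to G(R). (In other words, the k-closure of G is contained in G(R).) -/

import Mathlib

open Pointwise MulAction

/-- The invariance group `G(R)` of an unordered relation `R` on `Ω`:
all permutations `g` such that `x ∈ R` implies `g • x ∈ R`. -/
def invGroup {Ω : Type*} [Fintype Ω] [DecidableEq Ω] (R : Set (Finset Ω)) :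
    Subgroup (Equiv.Perm Ω) where
  carrier := {g | ∀ x ∈ R, g • x ∈ R}
  one_mem' := fun x hx => by simpa using hx
  mul_mem' := fun ha hb x hx => by rw [mul_smul]; exact ha _ (hb _ hx)
  inv_mem' := by
    intro g hg x hx
    have himg : (fun y : Finset _ => g • y) '' R ⊆ R := by
      rintro - ⟨y, hy, rfl⟩; exact hg y hy
    have heq : (fun y : Finset _ => g • y) '' R = R := by
      apply Set.eq_of_subset_of_ncard_le himg _ (Set.toFinite R)
      rw [Set.ncard_image_of_injective _ (MulAction.injective g)]
    rw [← heq] at hx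
    obtain ⟨y, hy, hxy⟩ := hx
    have : g⁻¹ • x = y := by rw [← hxy]; simp
    rwa [this]

/-- A permutation group on `Ω` is a relation group if it is the invariance group
of some unordered relation on `Ω`. -/
def IsRelationGroup {Ω : Type*} [Fintype Ω] [DecidableEq Ω]
    (G : Subgroup (Equiv.Perm Ω)) : Prop :=
  ∃ R : Set (Finset Ω), G = invGroup R

/-- `w` is a regular set for `G`: only the identity of `G` stabilizes `w` setwise. -/
def IsRegularSet {Ω : Type*} [DecidableEq Ω] (G : Subgroup (Equiv.Perm Ω))
    (w : Finset Ω) : Prop :=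
  ∀ g ∈ G, g • w = w → g = 1

/-- The arity of a relation: the set of cardinalities of its members. -/
def arity {Ω : Type*} (R : Set (Finset Ω)) : Set ℕ := {n | ∃ x ∈ R, x.card = n}

/-- `G` is orbit closed: every permutation mapping each finite subset into its
`G`-orbit already lies in `G`. -/
def IsOrbitClosed {Ω : Type*} [DecidableEq Ω] (G : Subgroup (Equiv.Perm Ω)) : Prop :=
  ∀ g : Equiv.Perm Ω, (∀ x : Finset Ω, ∃ h ∈ G, g • x = h • x) → g ∈ G

/-- `G` is set-transitive: transitive on `k`-element subsets for every `k`. -/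
def IsSetTransitive {Ω : Type*} [DecidableEq Ω] (G : Subgroup (Equiv.Perm Ω)) : Prop :=
  ∀ x y : Finset Ω, x.card = y.card → ∃ g ∈ G, g • x = y

/-- A permutation group is primitive if it is transitive and every block of the
action is trivial (a subsingleton or the whole set). -/
def IsPrimitivePermGroup {Ω : Type*} (G : Subgroup (Equiv.Perm Ω)) : Prop :=
  MulAction.IsPretransitive ↥G Ω ∧
    ∀ B : Set Ω, MulAction.IsBlock ↥G B → B.Subsingleton ∨ B = Set.univ


section Aux

open Finset Pointwise

variable {Ω : Type*} [Fintype Ω] [DecidableEq Ω]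

private lemma expand_sq' {Ω : Type*} (S T : Finset (Finset Ω)) (rel : Finset Ω → Finset Ω → Prop)
    [∀ x y, Decidable (rel x y)] (f : Finset Ω → ℤ) :
    ∑ y ∈ T, (∑ x ∈ S.filter (fun x => rel x y), f x) ^ 2 =
      ∑ x ∈ S, ∑ x' ∈ S,
        ((T.filter (fun y => rel x y ∧ rel x' y)).card : ℤ) * (f x * f x') := by
  have h1 : ∀ y ∈ T, (∑ x ∈ S.filter (fun x => rel x y), f x) ^ 2
      = ∑ x ∈ S, ∑ x' ∈ S,
        (if rel x y ∧ rel x' y then f x * f x' else 0) := by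
    intro y _
    rw [sq, Finset.sum_mul_sum, Finset.sum_filter]
    refine Finset.sum_congr rfl fun x _ => ?_
    by_cases hx : rel x y
    · rw [if_pos hx, Finset.sum_filter]
      exact Finset.sum_congr rfl fun x' _ => by by_cases h' : rel x' y <;> simp [hx, h']
    · rw [if_neg hx]
      exact (Finset.sum_eq_zero fun x' _ => by simp [hx]).symm
  rw [Finset.sum_congr rfl h1, Finset.sum_comm]
  refine Finset.sum_congr rfl fun x _ => ?_
  rw [Finset.sum_comm]
  refine Finset.sum_congr rfl fun x' _ => ?_
  rw [← Finset.sum_filter, Finset.sum_const, nsmul_eq_mul]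

private lemma c_diag' (m : ℕ) (x : Finset Ω) (hx : x.card = m) :
    (((Finset.univ : Finset Ω).powersetCard (m+1)).filter (fun y => x ⊆ y ∧ x ⊆ y)).card
      = Fintype.card Ω - m := by
  have himg : (((Finset.univ : Finset Ω).powersetCard (m+1)).filter (fun y => x ⊆ y ∧ x ⊆ y))
      = xᶜ.image (fun a => insert a x) := by
    ext y
    simp only [mem_filter, Finset.mem_powersetCard_univ, mem_image, Finset.mem_compl, and_self]
    constructor
    · rintro ⟨hcard, hsub⟩
      have h1 : (y \ x).card = 1 := by rw [card_sdiff_of_subset hsub, hcard, hx]; omega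
      obtain ⟨a, ha⟩ := Finset.card_eq_one.mp h1
      refine ⟨a, ?_, ?_⟩
      · have : a ∈ y \ x := ha ▸ Finset.mem_singleton_self a
        exact (Finset.mem_sdiff.mp this).2
      · have h2 := Finset.sdiff_union_of_subset hsub
        rw [ha] at h2
        rw [Finset.insert_eq, h2]
    · rintro ⟨a, ha, rfl⟩
      exact ⟨by rw [Finset.card_insert_of_notMem ha, hx], Finset.subset_insert _ _⟩
  rw [himg, Finset.card_image_of_injOn, Finset.card_compl, hx]
  intro a ha b hb hab
  simp only [Finset.coe_compl, Set.mem_compl_iff, Finset.mem_coe] at ha hb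
  simp only at hab
  have : a ∈ insert b x := by rw [← hab]; exact Finset.mem_insert_self a x
  rcases Finset.mem_insert.mp this with h | h
  · exact h
  · exact absurd h ha

private lemma d_diag' (m : ℕ) (hm : 1 ≤ m) (x : Finset Ω) (hx : x.card = m) :
    (((Finset.univ : Finset Ω).powersetCard (m-1)).filter (fun z => z ⊆ x ∧ z ⊆ x)).card
      = m := by
  have h0 : (((Finset.univ : Finset Ω).powersetCard (m-1)).filter (fun z => z ⊆ x ∧ z ⊆ x))
      = x.powersetCard (m-1) := by
    ext z
    simp only [mem_filter, Finset.mem_powersetCard, Finset.subset_univ, true_and, and_self]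
    tauto
  rw [h0, Finset.card_powersetCard, hx, Nat.choose_symm (by omega), Nat.choose_one_right]

private lemma c_eq_d' (m : ℕ) (hm : 1 ≤ m) (x x' : Finset Ω) (hx : x.card = m)
    (hx' : x'.card = m) (hne : x ≠ x') :
    (((Finset.univ : Finset Ω).powersetCard (m+1)).filter (fun y => x ⊆ y ∧ x' ⊆ y)).card
      = (((Finset.univ : Finset Ω).powersetCard (m-1)).filter (fun z => z ⊆ x ∧ z ⊆ x')).card := by
  have hcards : (x ∩ x').card + (x ∪ x').card = 2 * m := by
    rw [Finset.card_inter_add_card_union, hx, hx']; ring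
  have hint : (x ∩ x').card < m := by
    rcases lt_or_eq_of_le (le_trans (Finset.card_le_card (Finset.inter_subset_left)) hx.le) with h | h
    · exact h
    have h1 : x ∩ x' = x := Finset.eq_of_subset_of_card_le Finset.inter_subset_left (by omega)
    have hsub : x ⊆ x' := by rw [← h1]; exact Finset.inter_subset_right
    exact absurd (Finset.eq_of_subset_of_card_le hsub (by omega)) hne
  by_cases hc : (x ∩ x').card = m - 1
  · have hu : (x ∪ x').card = m + 1 := by omega
    have h1 : (((Finset.univ : Finset Ω).powersetCard (m+1)).filter (fun y => x ⊆ y ∧ x' ⊆ y))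
        = {x ∪ x'} := by
      ext y
      simp only [mem_filter, Finset.mem_powersetCard_univ, Finset.mem_singleton]
      constructor
      · rintro ⟨hcard, h1, h2⟩
        exact (Finset.eq_of_subset_of_card_le (Finset.union_subset h1 h2) (by omega)).symm
      · rintro rfl
        exact ⟨hu, Finset.subset_union_left, Finset.subset_union_right⟩
    have h2 : (((Finset.univ : Finset Ω).powersetCard (m-1)).filter (fun z => z ⊆ x ∧ z ⊆ x'))
        = {x ∩ x'} := by
      ext z
      simp only [mem_filter, Finset.mem_powersetCard_univ, Finset.mem_singleton]
      constructor
      · rintro ⟨hcard, h1, h2⟩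
        exact Finset.eq_of_subset_of_card_le (Finset.subset_inter h1 h2) (by omega)
      · rintro rfl
        exact ⟨hc, Finset.inter_subset_left, Finset.inter_subset_right⟩
    rw [h1, h2]; simp
  · have hc' : (x ∩ x').card < m - 1 := by omega
    have h1 : (((Finset.univ : Finset Ω).powersetCard (m+1)).filter (fun y => x ⊆ y ∧ x' ⊆ y))
        = ∅ := by
      rw [Finset.filter_eq_empty_iff]
      rintro y hy ⟨h1, h2⟩
      rw [Finset.mem_powersetCard_univ] at hy
      have := Finset.card_le_card (Finset.union_subset h1 h2)
      omega
    have h2 : (((Finset.univ : Finset Ω).powersetCard (m-1)).filter (fun z => z ⊆ x ∧ z ⊆ x'))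
        = ∅ := by
      rw [Finset.filter_eq_empty_iff]
      rintro z hz ⟨h1, h2⟩
      rw [Finset.mem_powersetCard_univ] at hz
      have := Finset.card_le_card (Finset.subset_inter h1 h2)
      omega
    rw [h1, h2]

private lemma gottlieb_step' (m : ℕ) (h2m : 2 * m < Fintype.card Ω) (f : Finset Ω → ℤ)
    (hU : ∀ y : Finset Ω, y.card = m + 1 → ∑ x ∈ Finset.powersetCard m y, f x = 0) :
    ∀ x : Finset Ω, x.card = m → f x = 0 := by
  rcases Nat.eq_zero_or_pos m with rfl | hm
  · intro x hx
    rw [Finset.card_eq_zero] at hx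
    subst hx
    have hn : 0 < Fintype.card Ω := by omega
    obtain ⟨a⟩ := Fintype.card_pos_iff.mp hn
    have := hU {a} (by simp)
    simpa using this
  set n := Fintype.card Ω with hn
  set Sm := (Finset.univ : Finset Ω).powersetCard m with hSm
  have hpc : ∀ y : Finset Ω, Finset.powersetCard m y = Sm.filter (fun x => x ⊆ y) := by
    intro y
    ext x
    simp [hSm, Finset.mem_powersetCard, Finset.mem_powersetCard_univ, and_comm]
  have hA : ∑ y ∈ (Finset.univ : Finset Ω).powersetCard (m+1),
      (∑ x ∈ Sm.filter (fun x => x ⊆ y), f x) ^ 2 = 0 := by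
    apply Finset.sum_eq_zero
    intro y hy
    rw [← hpc y, hU y (Finset.mem_powersetCard_univ.mp hy)]
    ring
  have hB : 0 ≤ ∑ z ∈ (Finset.univ : Finset Ω).powersetCard (m-1),
      (∑ x ∈ Sm.filter (fun x => z ⊆ x), f x) ^ 2 :=
    Finset.sum_nonneg fun z _ => sq_nonneg _
  have key : ∑ y ∈ (Finset.univ : Finset Ω).powersetCard (m+1),
        (∑ x ∈ Sm.filter (fun x => x ⊆ y), f x) ^ 2
      = (∑ z ∈ (Finset.univ : Finset Ω).powersetCard (m-1),
          (∑ x ∈ Sm.filter (fun x => z ⊆ x), f x) ^ 2)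
        + ((n : ℤ) - 2 * m) * ∑ x ∈ Sm, f x ^ 2 := by
    rw [expand_sq' Sm _ (fun x y => x ⊆ y) f, expand_sq' Sm _ (fun x z => z ⊆ x) f]
    have hdiff : ∀ x ∈ Sm, ∀ x' ∈ Sm,
        ((((Finset.univ : Finset Ω).powersetCard (m+1)).filter
            (fun y => x ⊆ y ∧ x' ⊆ y)).card : ℤ) * (f x * f x')
        = ((((Finset.univ : Finset Ω).powersetCard (m-1)).filter
            (fun z => z ⊆ x ∧ z ⊆ x')).card : ℤ) * (f x * f x')
          + (if x' = x then ((n : ℤ) - 2 * m) * f x ^ 2 else 0) := by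
      intro x hx x' hx'
      rw [Finset.mem_powersetCard_univ] at hx hx'
      by_cases hxx : x' = x
      · subst hxx
        rw [if_pos rfl, c_diag' m x' hx, d_diag' m hm x' hx]
        have hmn : m ≤ n := by omega
        push_cast [hn, Nat.cast_sub (show m ≤ Fintype.card Ω by omega)]
        ring
      · rw [if_neg hxx, c_eq_d' m hm x x' hx hx' (Ne.symm hxx), add_zero]
    calc ∑ x ∈ Sm, ∑ x' ∈ Sm,
          ((((Finset.univ : Finset Ω).powersetCard (m+1)).filter
            (fun y => x ⊆ y ∧ x' ⊆ y)).card : ℤ) * (f x * f x')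
        = ∑ x ∈ Sm, ∑ x' ∈ Sm,
          (((((Finset.univ : Finset Ω).powersetCard (m-1)).filter
            (fun z => z ⊆ x ∧ z ⊆ x')).card : ℤ) * (f x * f x')
          + (if x' = x then ((n : ℤ) - 2 * m) * f x ^ 2 else 0)) := by
          refine Finset.sum_congr rfl fun x hx => Finset.sum_congr rfl fun x' hx' => ?_
          exact hdiff x hx x' hx'
      _ = (∑ x ∈ Sm, ∑ x' ∈ Sm,
          ((((Finset.univ : Finset Ω).powersetCard (m-1)).filter
            (fun z => z ⊆ x ∧ z ⊆ x')).card : ℤ) * (f x * f x'))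
          + ∑ x ∈ Sm, ∑ x' ∈ Sm, (if x' = x then ((n : ℤ) - 2 * m) * f x ^ 2 else 0) := by
          rw [← Finset.sum_add_distrib]
          refine Finset.sum_congr rfl fun x hx => ?_
          rw [← Finset.sum_add_distrib]
      _ = (∑ x ∈ Sm, ∑ x' ∈ Sm,
          ((((Finset.univ : Finset Ω).powersetCard (m-1)).filter
            (fun z => z ⊆ x ∧ z ⊆ x')).card : ℤ) * (f x * f x'))
          + ((n : ℤ) - 2 * m) * ∑ x ∈ Sm, f x ^ 2 := by
          congr 1
          rw [Finset.mul_sum]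
          refine Finset.sum_congr rfl fun x hx => ?_
          rw [Finset.sum_ite_eq' Sm x (fun _ => ((n : ℤ) - 2 * m) * f x ^ 2), if_pos hx]
      _ = _ := rfl
  have hsq : ∑ x ∈ Sm, f x ^ 2 = 0 := by
    have hpos : (0 : ℤ) < (n : ℤ) - 2 * m := by
      have : 2 * m < n := h2m
      omega
    nlinarith [hB, hA, key, Finset.sum_nonneg (fun x (_ : x ∈ Sm) => sq_nonneg (f x))]
  intro x hx
  have hxS : x ∈ Sm := Finset.mem_powersetCard_univ.mpr hx
  have := (Finset.sum_eq_zero_iff_of_nonneg (fun x _ => sq_nonneg (f x))).mp hsq x hxS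
  exact pow_eq_zero_iff (by norm_num) |>.mp this

private lemma pc_smul' (p : Equiv.Perm Ω) (m : ℕ) (y : Finset Ω) :
    Finset.powersetCard m (p • y) = (Finset.powersetCard m y).image (fun x => p • x) := by
  ext x
  simp only [Finset.mem_powersetCard, Finset.mem_image]
  constructor
  · rintro ⟨hsub, hcard⟩
    refine ⟨p⁻¹ • x, ⟨?_, ?_⟩, ?_⟩
    · intro a ha
      rw [Finset.mem_inv_smul_finset_iff] at ha
      have := hsub ha
      rwa [← Finset.mem_inv_smul_finset_iff, inv_smul_smul] at this
    · rw [Finset.card_smul_finset, hcard]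
    · simp
  · rintro ⟨x', ⟨hsub, hcard⟩, rfl⟩
    exact ⟨Finset.smul_finset_subset_smul_finset hsub, by rw [Finset.card_smul_finset, hcard]⟩

private lemma orbit_step' (G : Subgroup (Equiv.Perm Ω)) (g : Equiv.Perm Ω) (m : ℕ)
    (h2m : 2 * m < Fintype.card Ω)
    (hg : ∀ y : Finset Ω, y.card = m + 1 → ∃ h ∈ G, g • y = h • y) :
    ∀ x : Finset Ω, x.card = m → ∃ h ∈ G, g • x = h • x := by
  classical
  intro x0 hx0
  set O : Finset Ω → Prop := fun x => ∃ h ∈ G, x = h • x0 with hO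
  have hOinv : ∀ h ∈ G, ∀ x : Finset Ω, O (h • x) ↔ O x := by
    intro h hh x
    constructor
    · rintro ⟨h', hh', heq⟩
      exact ⟨h⁻¹ * h', mul_mem (inv_mem hh) hh', by rw [mul_smul, ← heq, inv_smul_smul]⟩
    · rintro ⟨h', hh', rfl⟩
      exact ⟨h * h', mul_mem hh hh', by rw [mul_smul]⟩
  set f : Finset Ω → ℤ := fun x => (if O x then 1 else 0) - (if O (g • x) then 1 else 0)
    with hf
  have hU : ∀ y : Finset Ω, y.card = m + 1 → ∑ x ∈ Finset.powersetCard m y, f x = 0 := by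
    intro y hy
    obtain ⟨h, hh, hgy⟩ := hg y hy
    have hinj : ∀ (p : Equiv.Perm Ω), Set.InjOn (fun x : Finset Ω => p • x)
        ↑(Finset.powersetCard m y) := fun p a _ b _ hab =>
      MulAction.injective (β := Finset Ω) p hab
    have h2 : ∑ x ∈ Finset.powersetCard m y, (if O (g • x) then (1:ℤ) else 0)
        = ∑ x ∈ Finset.powersetCard m y, (if O x then (1:ℤ) else 0) := by
      calc ∑ x ∈ Finset.powersetCard m y, (if O (g • x) then (1:ℤ) else 0)
          = ∑ x ∈ (Finset.powersetCard m y).image (fun x => g • x),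
              (if O x then (1:ℤ) else 0) := by
            rw [Finset.sum_image (fun a ha b hb hab =>
              hinj g (Finset.mem_coe.mpr ha) (Finset.mem_coe.mpr hb) hab)]
        _ = ∑ x ∈ (Finset.powersetCard m y).image (fun x => h • x),
              (if O x then (1:ℤ) else 0) := by
            rw [← pc_smul' g m y, ← pc_smul' h m y, hgy]
        _ = ∑ x ∈ Finset.powersetCard m y, (if O (h • x) then (1:ℤ) else 0) := by
            rw [Finset.sum_image (fun a ha b hb hab =>
              hinj h (Finset.mem_coe.mpr ha) (Finset.mem_coe.mpr hb) hab)]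
        _ = ∑ x ∈ Finset.powersetCard m y, (if O x then (1:ℤ) else 0) := by
            refine Finset.sum_congr rfl fun x _ => ?_
            simp only [hOinv h hh]
    simp only [hf, Finset.sum_sub_distrib, h2, sub_self]
  have hres := gottlieb_step' m h2m f hU x0 hx0
  have hOx0 : O x0 := ⟨1, one_mem G, by rw [one_smul]⟩
  rw [hf] at hres
  simp only [if_pos hOx0] at hres
  by_cases hgx : O (g • x0)
  · obtain ⟨h, hh, heq⟩ := hgx
    exact ⟨h, hh, heq⟩
  · simp [hgx] at hres

private lemma smul_compl' (p : Equiv.Perm Ω) (s : Finset Ω) : p • sᶜ = (p • s)ᶜ := by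
  rw [Finset.compl_eq_univ_sdiff, Finset.compl_eq_univ_sdiff, Finset.smul_finset_sdiff,
    Finset.smul_finset_univ]

end Aux

/-- If `G ≤ G(R)`, `1 ≤ k`, `2k ≤ n + 1`, and no member of `R` has cardinality
strictly between `k` and `n - k`, then every permutation `g` mapping each
`k`-element subset into its `G`-orbit lies in `G(R)`. -/
theorem kClosure_le_invGroup {Ω : Type*} [Fintype Ω] [DecidableEq Ω] (n : ℕ)
    (hn : Fintype.card Ω = n) (G : Subgroup (Equiv.Perm Ω)) (R : Set (Finset Ω))
    (hGR : G ≤ invGroup R) (k : ℕ) (hk1 : 1 ≤ k) (hk2 : 2 * k ≤ n + 1)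
    (hR : ∀ x ∈ R, ¬(k < x.card ∧ x.card < n - k))
    (g : Equiv.Perm Ω) (hg : ∀ x : Finset Ω, x.card = k → ∃ h ∈ G, g • x = h • x) :
    g ∈ invGroup R := by
  -- downward induction: orbits are preserved on all m-sets with m ≤ k
  have key : ∀ d m, m + d = k → ∀ x : Finset Ω, x.card = m → ∃ h ∈ G, g • x = h • x := by
    intro d
    induction d with
    | zero =>
      intro m hm x hx
      have hmk : m = k := by omega
      subst hmk
      exact hg x hx
    | succ d ih =>
      intro m hm x hx
      have h2m : 2 * m < Fintype.card Ω := by rw [hn]; omega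
      exact orbit_step' G g m h2m (fun y hy => ih (m+1) (by omega) y hy) x hx
  intro x hx
  have hxn : x.card ≤ n := by rw [← hn]; exact Finset.card_le_univ x
  have hcases := hR x hx
  rcases le_or_gt x.card k with hle | hgt
  · obtain ⟨h, hh, heq⟩ := key (k - x.card) x.card (by omega) x rfl
    rw [heq]
    exact hGR hh x hx
  · have hge : n - k ≤ x.card := by omega
    have hcompl : (xᶜ).card ≤ k := by
      rw [Finset.card_compl, hn]
      omega
    obtain ⟨h, hh, heq⟩ := key (k - (xᶜ).card) (xᶜ).card (by omega) xᶜ rfl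
    rw [smul_compl', smul_compl'] at heq
    have hgx : g • x = h • x := by
      have := congrArg compl heq
      simpa using this
    rw [hgx]
    exact hGR hh x hx
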